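/- For the ideal m = ⋃_n m_n of the recursive construction and every n ∈ ℕ, the following are equivalent: (1) x_n ∈ m_{n+1}; (2) x_n ∈ m; (3) 1 ∉ m + (x_n); (4) 1 ∉ m_n + (x_n). -/

import Mathlib

/-- The recursive construction: `m₀ = {0}`,
`m_{n+1} = m_n + ({x_n | 1 ∉ m_n + (x_n)})`, where the negation `¬φ`
is interpreted as `φ → (1 = 0)` in the ring. -/
def mSeq {A : Type*} [CommRing A] (x : ℕ → A) : ℕ → Ideal A
  | 0 => ⊥
  | n + 1 => mSeq x n ⊔
      Ideal.span {y | y = x n ∧ ((1 : A) ∈ mSeq x n ⊔ Ideal.span {x n} → (1 : A) = 0)}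

/-- The union `m = ⋃ₙ mₙ`, as a set. -/
def mUnion {A : Type*} [CommRing A] (x : ℕ → A) : Set A :=
  ⋃ n, (mSeq x n : Set A)

/-- For every `n`, the following are equivalent:
(1) `x_n ∈ m_{n+1}`; (2) `x_n ∈ m`; (3) `1 ∉ m + (x_n)`; (4) `1 ∉ m_n + (x_n)`,
where `¬φ` means `φ → 1 = 0`. -/
lemma mSeq_mono {A : Type*} [CommRing A] (x : ℕ → A) : Monotone (mSeq x) :=
  monotone_nat_of_le_succ fun _ => le_sup_left

lemma mSeq_proper {A : Type*} [CommRing A] (x : ℕ → A) :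
    ∀ N, (1 : A) ∈ mSeq x N → (1 : A) = 0 := by
  intro N
  induction N with
  | zero => intro h; simpa [mSeq] using h
  | succ n ih =>
    intro h
    by_cases hC : (1 : A) ∈ mSeq x n ⊔ Ideal.span {x n} → (1 : A) = 0
    · apply hC
      refine (show mSeq x n ⊔ Ideal.span {y | y = x n ∧ ((1 : A) ∈ mSeq x n ⊔ Ideal.span {x n} → (1 : A) = 0)} ≤ mSeq x n ⊔ Ideal.span {x n} from
        sup_le_sup le_rfl (Ideal.span_mono ?_)) h
      rintro y ⟨rfl, -⟩; rfl
    · apply ih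
      have hs : {y | y = x n ∧ ((1 : A) ∈ mSeq x n ⊔ Ideal.span {x n} → (1 : A) = 0)}
          = (∅ : Set A) := by
        ext y
        simp only [Set.mem_setOf_eq, Set.mem_empty_iff_false, iff_false, not_and]
        intro _ hy; exact hC hy
      rw [mSeq, hs, Ideal.span_empty, sup_bot_eq] at h
      exact h

lemma mUnion_le_iSup {A : Type*} [CommRing A] (x : ℕ → A) :
    mUnion x ⊆ ((⨆ n, mSeq x n : Ideal A) : Set A) := by
  intro y hy
  obtain ⟨k, hk⟩ := Set.mem_iUnion.1 hy
  exact Ideal.mem_iSup_of_mem k hk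

lemma mem_iSup_mSeq {A : Type*} [CommRing A] (x : ℕ → A) (a : A)
    (h : a ∈ (⨆ n, mSeq x n : Ideal A)) : ∃ k, a ∈ mSeq x k :=
  (Submodule.mem_iSup_of_chain ⟨mSeq x, mSeq_mono x⟩ a).1 h

theorem mUnion_mem_tfae {A : Type*} [CommRing A] (x : ℕ → A) (hx : Function.Surjective x)
    (n : ℕ) :
    (x n ∈ mSeq x (n + 1) ↔ x n ∈ mUnion x) ∧
    (x n ∈ mUnion x ↔ ((1 : A) ∈ Ideal.span (mUnion x ∪ {x n}) → (1 : A) = 0)) ∧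
    (((1 : A) ∈ Ideal.span (mUnion x ∪ {x n}) → (1 : A) = 0) ↔
      ((1 : A) ∈ mSeq x n ⊔ Ideal.span {x n} → (1 : A) = 0)) := by
  have h12 : x n ∈ mSeq x (n + 1) → x n ∈ mUnion x := fun h =>
    Set.mem_iUnion.2 ⟨n + 1, h⟩
  have h23 : x n ∈ mUnion x →
      ((1 : A) ∈ Ideal.span (mUnion x ∪ {x n}) → (1 : A) = 0) := by
    intro h2 h1
    have hsub : mUnion x ∪ {x n} ⊆ ((⨆ k, mSeq x k : Ideal A) : Set A) := by
      intro y hy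
      rcases hy with hy | hy
      · exact mUnion_le_iSup x hy
      · rcases hy with rfl
        exact mUnion_le_iSup x h2
    have := (Ideal.span_le.2 hsub) h1
    obtain ⟨k, hk⟩ := mem_iSup_mSeq x 1 this
    exact mSeq_proper x k hk
  have h34 : ((1 : A) ∈ Ideal.span (mUnion x ∪ {x n}) → (1 : A) = 0) →
      ((1 : A) ∈ mSeq x n ⊔ Ideal.span {x n} → (1 : A) = 0) := by
    intro h3 h1
    apply h3
    have hle : mSeq x n ⊔ Ideal.span {x n} ≤ Ideal.span (mUnion x ∪ {x n}) := by
      apply sup_le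
      · intro y hy
        exact Ideal.subset_span (Set.mem_union_left _ (Set.mem_iUnion.2 ⟨n, hy⟩))
      · exact Ideal.span_mono (Set.subset_union_right)
    exact hle h1
  have h41 : ((1 : A) ∈ mSeq x n ⊔ Ideal.span {x n} → (1 : A) = 0) →
      x n ∈ mSeq x (n + 1) := by
    intro h4
    exact le_sup_right (a := mSeq x n) (Ideal.subset_span ⟨rfl, h4⟩)
  exact ⟨⟨h12, fun h2 => h41 (h34 (h23 h2))⟩,
    ⟨h23, fun h3 => h12 (h41 (h34 h3))⟩,
    ⟨h34, fun h4 => h23 (h12 (h41 h4))⟩⟩
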